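/- Let p = (z_p, w_p) and q = (z_q, w_q) be points in ℂ² with w_p ≠ 0, w_q ≠ 0, and p ≠ q. Then the polynomials ξ ↦ φ(\bar{p}, ξ) and ξ ↦ φ(\bar{q}, ξ) defining the Segre varieties Q_p and Q_q of M_ε are not identically equal; i.e., distinct points with nonzero w-coordinate have distinct Segre varieties. -/

import Mathlib

open Complex

/-- The graphing function `φ(p̄, ξ)` of the Segre variety of `M_ε`. -/
noncomputable def segrePhi (ε₀ c ε : ℝ) (zp wp ξ : ℂ) : ℂ :=
  -((ε₀ : ℂ) * (ξ ^ 4 * (starRingEnd ℂ zp) ^ 4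
      + ((c : ℂ) / 2) * (ξ ^ 7 * starRingEnd ℂ zp + ξ * (starRingEnd ℂ zp) ^ 7))
    + ξ ^ 5 * (starRingEnd ℂ zp) ^ 5 + (ε : ℂ) * ξ * starRingEnd ℂ zp - 1)
    / starRingEnd ℂ wp

/-- Distinct points with nonzero `w`-coordinate have distinct Segre varieties:
the graphing polynomials `φ(p̄, ·)` and `φ(q̄, ·)` are not identically equal. -/
theorem stmt_10 (ε₀ c ε : ℝ) (h₀ : 0 < ε₀) (hc : c ≠ 0)
    (zp wp zq wq : ℂ) (hwp : wp ≠ 0) (hwq : wq ≠ 0)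
    (hpq : (zp, wp) ≠ (zq, wq)) :
    ¬ (∀ ξ : ℂ, segrePhi ε₀ c ε zp wp ξ = segrePhi ε₀ c ε zq wq ξ) := by
  intro h
  set a := starRingEnd ℂ zp with ha
  set b := starRingEnd ℂ zq with hb
  have hwp' : starRingEnd ℂ wp ≠ 0 := by
    rw [starRingEnd_apply]; exact star_ne_zero.mpr hwp
  have hwq' : starRingEnd ℂ wq ≠ 0 := by
    rw [starRingEnd_apply]; exact star_ne_zero.mpr hwq
  -- at ξ = 0 we get wp = wq
  have h0 := h 0
  simp only [segrePhi] at h0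
  have hw : wp = wq := by
    have : starRingEnd ℂ wp = starRingEnd ℂ wq := by
      field_simp at h0
      have h0' := h0.symm
      simp at h0'
      linear_combination h0' / 2
    exact (starRingEnd ℂ).injective this
  -- numerator equality for all ξ
  have hnum : ∀ ξ : ℂ,
      (ε₀ : ℂ) * (ξ ^ 4 * a ^ 4 + ((c : ℂ) / 2) * (ξ ^ 7 * a + ξ * a ^ 7))
        + ξ ^ 5 * a ^ 5 + (ε : ℂ) * ξ * a
      = (ε₀ : ℂ) * (ξ ^ 4 * b ^ 4 + ((c : ℂ) / 2) * (ξ ^ 7 * b + ξ * b ^ 7))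
        + ξ ^ 5 * b ^ 5 + (ε : ℂ) * ξ * b := by
    intro ξ
    have hξ := h ξ
    simp only [segrePhi, ← hw] at hξ
    rw [div_eq_div_iff hwp' hwp'] at hξ
    have hξ' := mul_right_cancel₀ hwp' hξ
    linear_combination -hξ'
  -- build the difference polynomial
  set P : Polynomial ℂ :=
      Polynomial.C ((ε : ℂ) * (a - b) + (ε₀ : ℂ) * ((c : ℂ) / 2) * (a ^ 7 - b ^ 7))
        * Polynomial.X
      + Polynomial.C ((ε₀ : ℂ) * (a ^ 4 - b ^ 4)) * Polynomial.X ^ 4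
      + Polynomial.C (a ^ 5 - b ^ 5) * Polynomial.X ^ 5
      + Polynomial.C ((ε₀ : ℂ) * ((c : ℂ) / 2) * (a - b)) * Polynomial.X ^ 7 with hP
  have hPz : P = 0 := by
    apply Polynomial.zero_of_eval_zero
    intro ξ
    simp only [hP, Polynomial.eval_add, Polynomial.eval_mul, Polynomial.eval_C,
      Polynomial.eval_X, Polynomial.eval_pow]
    linear_combination hnum ξ
  have hab : a = b := by
    have h7 := congrArg (fun p => Polynomial.coeff p 7) hPz
    simp only [hP, Polynomial.coeff_add, Polynomial.coeff_C_mul, Polynomial.coeff_X_pow,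
      Polynomial.coeff_X, Polynomial.coeff_zero] at h7
    norm_num at h7
    rcases h7 with (h' | h') | h'
    · exact absurd h' h₀.ne'
    · exact absurd h' hc
    · exact sub_eq_zero.mp h'
  have hz : zp = zq := (starRingEnd ℂ).injective (ha ▸ hb ▸ hab)
  exact hpq (by simp [hz, hw])
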